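/- Define ℚ_0 = ℙ_0 and, for n ≥ 1, ℚ_n(x) = ℙ_n(x) − 𝖯_n(ξ) (I_N + Λ 𝐊_{n−1})^{−1} Λ 𝕂_{n−1}(ξ, x). Then every entry of ℚ_n − ℙ_n lies in Π_{n−1}^d (so the entries of ℚ_n are polynomials of degree n with the same leading terms as those of ℙ_n), and every entry of ℚ_n is ⟨·,·⟩_ν-orthogonal to Π_{n−1}^d, i.e. ⟨(ℚ_n)_k, q⟩_ν = 0 for every q ∈ Π_{n−1}^d and every index k. Hence {ℚ_n}_{n≥0} is an orthogonal polynomial system for ⟨·,·⟩_ν. -/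

import Mathlib

open MeasureTheory MvPolynomial Matrix Finset

noncomputable section

/-- The space `Π_{n-1}^d` of real polynomials in `d` variables of total degree `< n`
(interpreted as the zero space for `n = 0`). -/
def piDegLT (d : ℕ) : ℕ → Submodule ℝ (MvPolynomial (Fin d) ℝ)
  | 0 => ⊥
  | n + 1 => MvPolynomial.restrictTotalDegree (Fin d) ℝ n

/-- The inner product `⟨p, q⟩_μ = ∫ p q dμ`. -/
def muInner {d : ℕ} (μ : Measure (Fin d → ℝ)) (p q : MvPolynomial (Fin d) ℝ) : ℝ :=
  ∫ x, eval x p * eval x q ∂μ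

/-- The inner product `⟨p, q⟩_ν = ⟨p, q⟩_μ + 𝐩(ξ)^T Λ 𝐪(ξ)`. -/
def nuInner {d N : ℕ} (μ : Measure (Fin d → ℝ)) (ξ : Fin N → (Fin d → ℝ))
    (Λ : Matrix (Fin N) (Fin N) ℝ) (p q : MvPolynomial (Fin d) ℝ) : ℝ :=
  muInner μ p q + (fun i => eval (ξ i) p) ⬝ᵥ Λ.mulVec (fun i => eval (ξ i) q)

/-- The reproducing kernel `K_n(dμ; x, y) = Σ_{j=0}^n ℙ_j(x)^T ℙ_j(y)` of `Π_n^d`. -/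
def Kmu {d : ℕ} (r : ℕ → ℕ) (P : (n : ℕ) → Fin (r n) → MvPolynomial (Fin d) ℝ)
    (n : ℕ) (x y : Fin d → ℝ) : ℝ :=
  ∑ j ∈ Finset.range (n + 1), ∑ k : Fin (r j), eval x (P j k) * eval y (P j k)

/-- `K_n(dμ; x, ·)` as a polynomial (in the second variable). -/
def kerPoly {d : ℕ} (r : ℕ → ℕ) (P : (n : ℕ) → Fin (r n) → MvPolynomial (Fin d) ℝ)
    (n : ℕ) (x : Fin d → ℝ) : MvPolynomial (Fin d) ℝ :=
  ∑ j ∈ Finset.range (n + 1), ∑ k : Fin (r j), (eval x (P j k)) • P j k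

/-- `K_{n-1}(dμ; x, ·)` as a polynomial, with the convention `K_{-1} = 0`. -/
def kerPolyM1 {d : ℕ} (r : ℕ → ℕ) (P : (n : ℕ) → Fin (r n) → MvPolynomial (Fin d) ℝ) :
    ℕ → (Fin d → ℝ) → MvPolynomial (Fin d) ℝ
  | 0, _ => 0
  | n + 1, x => kerPoly r P n x

/-- The matrix `𝐊_n = (K_n(dμ; ξ_i, ξ_j))_{i,j=1}^N`. -/
def bigK {d N : ℕ} (r : ℕ → ℕ) (P : (n : ℕ) → Fin (r n) → MvPolynomial (Fin d) ℝ)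
    (ξ : Fin N → (Fin d → ℝ)) (n : ℕ) : Matrix (Fin N) (Fin N) ℝ :=
  Matrix.of fun i j => Kmu r P n (ξ i) (ξ j)

/-- The matrix `𝐊_{n-1}`, with the convention `𝐊_{-1} = 0`. -/
def bigKm1 {d N : ℕ} (r : ℕ → ℕ) (P : (n : ℕ) → Fin (r n) → MvPolynomial (Fin d) ℝ)
    (ξ : Fin N → (Fin d → ℝ)) : ℕ → Matrix (Fin N) (Fin N) ℝ
  | 0 => 0
  | n + 1 => bigK r P ξ n

/-- The matrix `𝖯_n(ξ)` with columns `ℙ_n(ξ_1), …, ℙ_n(ξ_N)`. -/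
def Pmat {d N : ℕ} (r : ℕ → ℕ) (P : (n : ℕ) → Fin (r n) → MvPolynomial (Fin d) ℝ)
    (ξ : Fin N → (Fin d → ℝ)) (n : ℕ) : Matrix (Fin (r n)) (Fin N) ℝ :=
  Matrix.of fun k i => eval (ξ i) (P n k)

/-- `ℚ_n(x) = ℙ_n(x) − 𝖯_n(ξ) (I_N + Λ 𝐊_{n−1})^{−1} Λ 𝕂_{n−1}(ξ, x)`, entrywise, as
polynomials (for `n = 0` this reduces to `ℚ_0 = ℙ_0`). -/
def Qpoly {d N : ℕ} (r : ℕ → ℕ) (P : (n : ℕ) → Fin (r n) → MvPolynomial (Fin d) ℝ)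
    (ξ : Fin N → (Fin d → ℝ)) (Λ : Matrix (Fin N) (Fin N) ℝ)
    (n : ℕ) (k : Fin (r n)) : MvPolynomial (Fin d) ℝ :=
  P n k - ∑ i : Fin N,
    ((Pmat r P ξ n * (1 + Λ * bigKm1 r P ξ n)⁻¹ * Λ) k i) • kerPolyM1 r P n (ξ i)


namespace QAux

variable {d : ℕ} {μ : Measure (Fin d → ℝ)}
  (hint : ∀ p q : MvPolynomial (Fin d) ℝ, Integrable (fun x => eval x p * eval x q) μ)

lemma muInner_symm (p q) : muInner μ p q = muInner μ q p := by
  unfold muInner; simp [mul_comm]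

lemma muInner_zero_left (q) : muInner μ 0 q = 0 := by
  simp [muInner]

include hint in
lemma muInner_add_left (p1 p2 q) :
    muInner μ (p1 + p2) q = muInner μ p1 q + muInner μ p2 q := by
  unfold muInner
  simp only [map_add, add_mul]
  exact integral_add (hint p1 q) (hint p2 q)

lemma muInner_smul_left (c : ℝ) (p q) :
    muInner μ (c • p) q = c * muInner μ p q := by
  unfold muInner
  simp only [smul_eval, mul_assoc]
  exact integral_const_mul c _

include hint in
lemma muInner_sum_left {ι : Type*} (S : Finset ι) (f : ι → MvPolynomial (Fin d) ℝ) (q) :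
    muInner μ (∑ s ∈ S, f s) q = ∑ s ∈ S, muInner μ (f s) q := by
  classical
  induction S using Finset.induction with
  | empty => simp [muInner_zero_left]
  | insert _ _ h ih => rw [Finset.sum_insert h, muInner_add_left hint, ih, Finset.sum_insert h]

include hint in
lemma muInner_sub_left (p1 p2 q) :
    muInner μ (p1 - p2) q = muInner μ p1 q - muInner μ p2 q := by
  have h := muInner_add_left hint (p1 - p2) p2 q
  rw [sub_add_cancel] at h
  linarith

variable (r : ℕ → ℕ) (P : (n : ℕ) → Fin (r n) → MvPolynomial (Fin d) ℝ)
  (hdeg : ∀ n k, P n k ∈ MvPolynomial.restrictTotalDegree (Fin d) ℝ n)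
  (horth : ∀ n k, ∀ q ∈ piDegLT d n, muInner μ (P n k) q = 0)
  (honb : ∀ n (k l : Fin (r n)), muInner μ (P n k) (P n l) = if k = l then 1 else 0)

include hdeg horth in
lemma muInner_P_ne {j j' : ℕ} (h : j ≠ j') (k : Fin (r j)) (k' : Fin (r j')) :
    muInner μ (P j k) (P j' k') = 0 := by
  rcases Nat.lt_or_ge j j' with hlt | hge
  · obtain ⟨m, rfl⟩ : ∃ m, j' = m + 1 := ⟨j' - 1, by omega⟩
    rw [muInner_symm]
    refine horth (m+1) k' (P j k) ?_
    show P j k ∈ MvPolynomial.restrictTotalDegree (Fin d) ℝ m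
    rw [MvPolynomial.mem_restrictTotalDegree]
    exact le_trans ((MvPolynomial.mem_restrictTotalDegree _ _ _).1 (hdeg j k)) (by omega)
  · have hlt : j' < j := lt_of_le_of_ne hge (Ne.symm h)
    obtain ⟨m, rfl⟩ : ∃ m, j = m + 1 := ⟨j - 1, by omega⟩
    refine horth (m+1) k (P j' k') ?_
    show P j' k' ∈ MvPolynomial.restrictTotalDegree (Fin d) ℝ m
    rw [MvPolynomial.mem_restrictTotalDegree]
    exact le_trans ((MvPolynomial.mem_restrictTotalDegree _ _ _).1 (hdeg j' k')) (by omega)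

include hint hdeg horth honb in
lemma reproducing
    (hspan : ∀ n, MvPolynomial.restrictTotalDegree (Fin d) ℝ n ≤
      Submodule.span ℝ {p | ∃ j, j ≤ n ∧ ∃ k, p = P j k})
    (n : ℕ) (x : Fin d → ℝ) (q : MvPolynomial (Fin d) ℝ)
    (hq : q ∈ MvPolynomial.restrictTotalDegree (Fin d) ℝ n) :
    muInner μ (kerPoly r P n x) q = eval x q := by
  have hq' := hspan n hq
  clear hq
  induction hq' using Submodule.span_induction with
  | mem p hp =>
    obtain ⟨j, hj, k, rfl⟩ := hp
    unfold kerPoly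
    rw [muInner_sum_left hint]
    rw [Finset.sum_eq_single j]
    · rw [muInner_sum_left hint]
      have : ∀ k' : Fin (r j), muInner μ (eval x (P j k') • P j k') (P j k)
          = (if k' = k then eval x (P j k) else 0) := by
        intro k'
        rw [muInner_smul_left, honb]
        by_cases h : k' = k <;> simp [h]
      simp only [this]
      simp
    · intro j' _ hj'
      rw [muInner_sum_left hint]
      refine Finset.sum_eq_zero fun k' _ => ?_
      rw [muInner_smul_left, muInner_P_ne r P hdeg horth hj' k' k, mul_zero]
    · intro h
      exact absurd (Finset.mem_range.2 (by omega)) h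
  | zero => simp [muInner]
  | add p1 p2 _ _ h1 h2 =>
    rw [muInner_symm, muInner_add_left hint, muInner_symm p1, muInner_symm p2, h1, h2, map_add]
  | smul c p _ h =>
    rw [muInner_symm, muInner_smul_left, muInner_symm, h, smul_eval]

end QAux

/-- The polynomials `ℚ_n` defined by
`ℚ_0 = ℙ_0`, `ℚ_n(x) = ℙ_n(x) − 𝖯_n(ξ)(I_N + Λ 𝐊_{n−1})^{−1} Λ 𝕂_{n−1}(ξ, x)` have entries
differing from those of `ℙ_n` by polynomials in `Π_{n-1}^d`, and every entry of `ℚ_n`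
is `⟨·,·⟩_ν`-orthogonal to `Π_{n-1}^d`; hence `{ℚ_n}` is an OPS for `⟨·,·⟩_ν`. -/

theorem Qpoly_is_orthogonal_system
    {d N : ℕ} (hd : 1 ≤ d) (hN : 1 ≤ N)
    (μ : Measure (Fin d → ℝ))
    (hint : ∀ p q : MvPolynomial (Fin d) ℝ,
      Integrable (fun x => eval x p * eval x q) μ)
    (hpos : ∀ p : MvPolynomial (Fin d) ℝ, p ≠ 0 → 0 < ∫ x, (eval x p) ^ 2 ∂μ)
    (r : ℕ → ℕ) (hr : ∀ n, r n = Nat.choose (n + d - 1) n)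
    (P : (n : ℕ) → Fin (r n) → MvPolynomial (Fin d) ℝ)
    (hdeg : ∀ n k, P n k ∈ MvPolynomial.restrictTotalDegree (Fin d) ℝ n)
    (horth : ∀ n k, ∀ q ∈ piDegLT d n, muInner μ (P n k) q = 0)
    (honb : ∀ n (k l : Fin (r n)), muInner μ (P n k) (P n l) = if k = l then 1 else 0)
    (hspan : ∀ n, MvPolynomial.restrictTotalDegree (Fin d) ℝ n ≤
      Submodule.span ℝ {p | ∃ j, j ≤ n ∧ ∃ k, p = P j k})
    (ξ : Fin N → (Fin d → ℝ)) (hξ : Function.Injective ξ)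
    (Λ : Matrix (Fin N) (Fin N) ℝ) (hΛ : Λ.PosDef) :
    ∀ n (k : Fin (r n)),
      (Qpoly r P ξ Λ n k - P n k ∈ piDegLT d n) ∧
      (∀ q ∈ piDegLT d n, nuInner μ ξ Λ (Qpoly r P ξ Λ n k) q = 0) := by
  classical
  intro n k
  cases n with
  | zero =>
    constructor
    · show _ ∈ (⊥ : Submodule ℝ _)
      rw [Submodule.mem_bot]
      simp [Qpoly, kerPolyM1]
    · intro q hq
      have hq0 : q = 0 := (Submodule.mem_bot ℝ).mp hq
      subst hq0
      simp [nuInner, muInner, Matrix.mulVec, dotProduct]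
  | succ n =>
    have hKm1 : bigKm1 r P ξ (n+1) = bigK r P ξ n := rfl
    set K := bigK r P ξ n with hKdef
    set Pm := Pmat r P ξ (n+1) with hPmdef
    set M := Pmat r P ξ (n+1) * (1 + Λ * bigKm1 r P ξ (n+1))⁻¹ * Λ with hMdef
    have hQ : Qpoly r P ξ Λ (n+1) k
        = P (n+1) k - ∑ i : Fin N, M k i • kerPoly r P n (ξ i) := rfl
    have hker : ∀ x, kerPoly r P n x ∈ MvPolynomial.restrictTotalDegree (Fin d) ℝ n := by
      intro x
      unfold kerPoly
      refine Submodule.sum_mem _ fun j hj => Submodule.sum_mem _ fun k' _ =>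
        Submodule.smul_mem _ _ ?_
      rw [MvPolynomial.mem_restrictTotalDegree]
      exact le_trans ((MvPolynomial.mem_restrictTotalDegree _ _ _).1 (hdeg j k'))
        (Nat.lt_succ_iff.mp (Finset.mem_range.mp hj))
    constructor
    · show _ ∈ MvPolynomial.restrictTotalDegree (Fin d) ℝ n
      rw [hQ, sub_sub_cancel_left]
      exact Submodule.neg_mem _ (Submodule.sum_mem _ fun i _ =>
        Submodule.smul_mem _ _ (hker (ξ i)))
    · intro q hq
      have hq' : q ∈ MvPolynomial.restrictTotalDegree (Fin d) ℝ n := hq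
      have hrep : ∀ x, muInner μ (kerPoly r P n x) q = eval x q := fun x =>
        QAux.reproducing hint r P hdeg horth honb hspan n x q hq'
      -- matrix invertibility
      have hKps : K.PosSemidef := by
        have hKsum : K = ∑ j ∈ Finset.range (n+1), (Pmat r P ξ j)ᴴ * Pmat r P ξ j := by
          ext a b
          simp [hKdef, bigK, Kmu, Pmat, Matrix.sum_apply, Matrix.mul_apply, mul_comm]
        rw [hKsum]
        refine Finset.sum_induction _ _ (fun A B hA hB => hA.add hB) ?_ ?_
        · exact Matrix.PosSemidef.zero
        · exact fun j _ => Matrix.posSemidef_conjTranspose_mul_self _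
      have hdetΛ : IsUnit Λ.det := hΛ.det_pos.ne'.isUnit
      have hfact : (1 : Matrix (Fin N) (Fin N) ℝ) + Λ * K = Λ * (Λ⁻¹ + K) := by
        rw [mul_add, Matrix.mul_nonsing_inv Λ hdetΛ]
      have hpd : (Λ⁻¹ + K).PosDef := hΛ.inv.add_posSemidef hKps
      have hdet1 : IsUnit ((1 : Matrix (Fin N) (Fin N) ℝ) + Λ * K).det := by
        rw [hfact, Matrix.det_mul]
        exact hdetΛ.mul hpd.det_pos.ne'.isUnit
      have hBinv : ((1 : Matrix (Fin N) (Fin N) ℝ) + Λ * K)⁻¹ * (1 + Λ * K) = 1 :=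
        Matrix.nonsing_inv_mul _ hdet1
      have e1 : M + M * K * Λ = Pm * Λ := by
        have h2 : Pm * (((1 : Matrix (Fin N) (Fin N) ℝ) + Λ * K)⁻¹ * (1 + Λ * K)) * Λ
            = Pm * Λ := by rw [hBinv, Matrix.mul_one]
        calc M + M * K * Λ
            = Pm * (((1 : Matrix (Fin N) (Fin N) ℝ) + Λ * K)⁻¹ * (1 + Λ * K)) * Λ := by
              rw [hMdef, hKm1, hPmdef]
              simp [Matrix.mul_add, Matrix.add_mul, Matrix.mul_one, Matrix.mul_assoc]
          _ = Pm * Λ := h2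
      have hMkey : (Pm - M * K) * Λ = M := by
        rw [Matrix.sub_mul, ← e1, add_sub_cancel_right]
      -- value of muInner
      have hmu : muInner μ (Qpoly r P ξ Λ (n+1) k) q
          = -(∑ i : Fin N, M k i * eval (ξ i) q) := by
        rw [hQ, QAux.muInner_sub_left hint, QAux.muInner_sum_left hint,
          horth (n+1) k q hq]
        simp only [QAux.muInner_smul_left, hrep]
        ring
      -- evaluation at the nodes
      have heval : ∀ j, eval (ξ j) (Qpoly r P ξ Λ (n+1) k) = (Pm - M * K) k j := by
        intro j
        rw [hQ, map_sub, map_sum]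
        have hkev : ∀ i : Fin N, eval (ξ j) (M k i • kerPoly r P n (ξ i))
            = M k i * K i j := by
          intro i
          rw [smul_eval]
          congr 1
          simp [kerPoly, hKdef, bigK, Kmu, map_sum, smul_eval]
        simp only [hkev]
        simp [hPmdef, Pmat, Matrix.sub_apply, Matrix.mul_apply]
      -- conclude
      show muInner μ (Qpoly r P ξ Λ (n+1) k) q
          + (fun i => eval (ξ i) (Qpoly r P ξ Λ (n+1) k)) ⬝ᵥ
            Λ.mulVec (fun i => eval (ξ i) q) = 0
      set v : Fin N → ℝ := fun i => eval (ξ i) q with hv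
      have hfun : (fun i => eval (ξ i) (Qpoly r P ξ Λ (n+1) k))
          = fun i => (Pm - M * K) k i := funext heval
      rw [hmu, hfun]
      have hdot : (fun i => (Pm - M * K) k i) ⬝ᵥ Λ.mulVec v
          = (((Pm - M * K) * Λ) *ᵥ v) k := by
        have h0 : (fun i => (Pm - M * K) k i) ⬝ᵥ Λ.mulVec v
            = ((Pm - M * K) *ᵥ (Λ *ᵥ v)) k := rfl
        rw [h0, Matrix.mulVec_mulVec]
      rw [hdot, hMkey]
      have hM : (M *ᵥ v) k = ∑ i : Fin N, M k i * v i := rfl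
      rw [hM]
      ring
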